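/- Let b be a real number with 0 < b ≤ 1 and define f : ℝ → ℝ by f(r) = b · tanh(r/b). Then for every r ≥ 0: (i) the derivative satisfies f'(r) = 1/cosh(r/b)² = 4/(e^{−r/b} + e^{r/b})², (ii) the second derivative satisfies f''(r) ≤ 0, and (iii) f'(r)² + f(r)² ≤ 1. -/

import Mathlib

open Real

lemma hasDerivAt_tanh' (x : ℝ) : HasDerivAt Real.tanh (1 / (cosh x) ^ 2) x := by
  have h := (Real.hasDerivAt_sinh x).div (Real.hasDerivAt_cosh x) (Real.cosh_pos x).ne'
  have hfun : Real.tanh = fun x => Real.sinh x / Real.cosh x := by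
    funext y; exact Real.tanh_eq_sinh_div_cosh y
  rw [hfun]
  convert h using 1
  · rfl
  · rfl
  · rfl
  have := Real.cosh_sq_sub_sinh_sq x
  rw [← this]
  ring

lemma hasDerivAt_f (b : ℝ) (hb : 0 < b) (r : ℝ) :
    HasDerivAt (fun r => b * tanh (r / b)) (1 / (cosh (r / b)) ^ 2) r := by
  have h1 : HasDerivAt (fun r : ℝ => r / b) (1 / b) r := by
    simpa using (hasDerivAt_id r).div_const b
  have h2 := (hasDerivAt_tanh' (r / b)).comp r h1
  have h3 := h2.const_mul b
  convert h3 using 1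
  · rfl
  · rfl
  · rfl
  rw [mul_comm, mul_assoc, one_div_mul_cancel hb.ne', mul_one]

theorem tanh_warping_properties (b : ℝ) (hb : 0 < b) (hb1 : b ≤ 1)
    (f : ℝ → ℝ) (hf : f = fun r => b * tanh (r / b))
    (r : ℝ) (hr : 0 ≤ r) :
    (deriv f r = 1 / (cosh (r / b)) ^ 2 ∧
      deriv f r = 4 / (Real.exp (-r / b) + Real.exp (r / b)) ^ 2) ∧
    deriv (deriv f) r ≤ 0 ∧
    (deriv f r) ^ 2 + (f r) ^ 2 ≤ 1 := by
  subst hf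
  have hd : ∀ x : ℝ, deriv (fun r => b * tanh (r / b)) x = 1 / (cosh (x / b)) ^ 2 :=
    fun x => (hasDerivAt_f b hb x).deriv
  have hderiv : deriv (fun r => b * tanh (r / b)) = fun x => 1 / (cosh (x / b)) ^ 2 :=
    funext hd
  have hcoshpos : (0:ℝ) < cosh (r / b) := Real.cosh_pos _
  have hcosh1 : (1:ℝ) ≤ cosh (r / b) := Real.one_le_cosh _
  refine ⟨⟨hd r, ?_⟩, ?_, ?_⟩
  · rw [hd r, Real.cosh_eq, neg_div, add_comm (Real.exp (-(r/b))), div_pow, one_div,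
      inv_div]
    norm_num
  · -- second derivative
    rw [hderiv]
    have h1 : HasDerivAt (fun x : ℝ => x / b) (1 / b) r := by
      simpa using (hasDerivAt_id r).div_const b
    have hc : HasDerivAt (fun x : ℝ => cosh (x / b)) (sinh (r / b) * (1 / b)) r :=
      by have := (Real.hasDerivAt_cosh (r / b)).comp r h1; exact this
    have hsq : HasDerivAt (fun x : ℝ => (cosh (x / b)) ^ 2)
        (2 * cosh (r / b) * (sinh (r / b) * (1 / b))) r := by
      simpa [mul_comm, mul_assoc, mul_left_comm] using hc.fun_pow 2
    have hdiv : HasDerivAt (fun x : ℝ => 1 / (cosh (x / b)) ^ 2)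
        ((0 * (cosh (r / b)) ^ 2 - 1 * (2 * cosh (r / b) * (sinh (r / b) * (1 / b)))) /
          ((cosh (r / b)) ^ 2) ^ 2) r :=
      (hasDerivAt_const r (1:ℝ)).div hsq (by positivity)
    rw [hdiv.deriv]
    have hsinh : 0 ≤ sinh (r / b) := Real.sinh_nonneg_iff.2 (by positivity)
    have : (0:ℝ) < ((cosh (r / b)) ^ 2) ^ 2 := by positivity
    apply div_nonpos_of_nonpos_of_nonneg _ this.le
    have : 0 ≤ 2 * cosh (r / b) * (sinh (r / b) * (1 / b)) := by positivity
    linarith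
  · rw [hd r]
    have hs := Real.cosh_sq (r / b)
    have htanh : tanh (r / b) = sinh (r / b) / cosh (r / b) := Real.tanh_eq_sinh_div_cosh _
    have hb2 : b ^ 2 ≤ 1 := by nlinarith
    have key : (1 / (cosh (r / b)) ^ 2) ^ 2 + (tanh (r / b)) ^ 2 ≤ 1 := by
      rw [htanh, div_pow, div_pow]
      rw [div_add_div _ _ (by positivity) (by positivity)]
      rw [div_le_one (by positivity)]
      nlinarith [sq_nonneg (sinh (r/b)), sq_nonneg (cosh (r/b)^2 - 1)]
    have htnn : (tanh (r / b)) ^ 2 ≤ 1 := by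
      nlinarith [sq_nonneg (1 / (cosh (r / b)) ^ 2)]
    calc (1 / (cosh (r / b)) ^ 2) ^ 2 + (b * tanh (r / b)) ^ 2
        ≤ (1 / (cosh (r / b)) ^ 2) ^ 2 + (tanh (r / b)) ^ 2 := by
          rw [mul_pow]; nlinarith [sq_nonneg (tanh (r/b))]
      _ ≤ 1 := key
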